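/- Noise subspace bound: In the same setting as the signal subspace bound (K = UΣV^T true SVD with σ_k > 0, and K = Û [[Σ̂_t, Ŵ_12],[Ŵ_21, Σ̂_0 + W_22]] V̂^T an approximate block factorization), if σ_k² > ‖Σ̂_0 + W_22‖₂², then ‖V_k^T V̂_0‖₂ ≤ (σ_k ‖Ŵ_12‖₂ + ‖Ŵ_21‖₂ ‖Σ̂_0 + W_22‖₂) / (σ_k² − ‖Σ̂_0 + W_22‖₂²). -/

import Mathlib

open Matrix
open scoped Matrix.Norms.L2Operator

section AuxNoise

variable {m n : Type*} [Fintype m] [Fintype n] [DecidableEq m] [DecidableEq n]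

lemma aux_opNorm_transpose (A : Matrix m n ℝ) : ‖Aᵀ‖ = ‖A‖ := by
  rw [← Matrix.conjTranspose_eq_transpose_of_trivial, Matrix.l2_opNorm_conjTranspose]

lemma aux_opNorm_transpose_mul_self (A : Matrix m n ℝ) : ‖Aᵀ * A‖ = ‖A‖ * ‖A‖ := by
  rw [← Matrix.conjTranspose_eq_transpose_of_trivial, Matrix.l2_opNorm_conjTranspose_mul_self]

lemma aux_opNorm_one_le : ‖(1 : Matrix n n ℝ)‖ ≤ 1 := by
  have h := aux_opNorm_transpose_mul_self (1 : Matrix n n ℝ)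
  rw [Matrix.transpose_one, mul_one] at h
  nlinarith [Matrix.l2_opNorm_def (1 : Matrix n n ℝ) ▸ norm_nonneg (1 : Matrix n n ℝ)]

lemma aux_opNorm_le_one (A : Matrix m n ℝ) (h : Aᵀ * A = 1) : ‖A‖ ≤ 1 := by
  have h2 := aux_opNorm_transpose_mul_self A
  rw [h] at h2
  have h3 : ‖(1 : Matrix n n ℝ)‖ ≤ 1 := aux_opNorm_one_le
  nlinarith [norm_nonneg A]

lemma aux_opNorm_diagonal_le (d : n → ℝ) (c : ℝ) (hc : 0 ≤ c) (h : ∀ i, |d i| ≤ c) :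
    ‖Matrix.diagonal d‖ ≤ c := by
  rw [Matrix.l2_opNorm_def]
  refine ContinuousLinearMap.opNorm_le_bound _ hc fun x => ?_
  have hx : (LinearEquiv.trans Matrix.toEuclideanLin
      LinearMap.toContinuousLinearMap (Matrix.diagonal d)) x
      = (WithLp.equiv 2 (n → ℝ)).symm (Matrix.diagonal d *ᵥ (WithLp.equiv 2 (n → ℝ)) x) := rfl
  rw [hx]
  rw [EuclideanSpace.norm_eq]
  have hnx : c * ‖x‖ = Real.sqrt (c ^ 2 * ∑ i, ‖x i‖ ^ 2) := by
    rw [Real.sqrt_mul (by positivity), Real.sqrt_sq hc, EuclideanSpace.norm_eq]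
  rw [hnx]
  apply Real.sqrt_le_sqrt
  rw [Finset.mul_sum]
  apply Finset.sum_le_sum
  intro i _
  have hdd : ((WithLp.equiv 2 (n → ℝ)).symm (Matrix.diagonal d *ᵥ (WithLp.equiv 2 (n → ℝ)) x)) i
      = d i * x i := by
    simp [Matrix.mulVec_diagonal]
  rw [hdd]
  have hxi : ‖x i‖ = |x i| := Real.norm_eq_abs _
  rw [Real.norm_eq_abs, hxi]
  have h1 : |d i * x i| ^ 2 ≤ (c * |x i|) ^ 2 := by
    rw [abs_mul]
    apply pow_le_pow_left₀ (by positivity)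
    exact mul_le_mul_of_nonneg_right (h i) (abs_nonneg _)
  calc |d i * x i| ^ 2 ≤ (c * |x i|) ^ 2 := h1
    _ = c ^ 2 * |x i| ^ 2 := by ring

lemma aux_F1_mul : (fromRows (1 : Matrix m m ℝ) (0 : Matrix n m ℝ))ᵀ *
    fromRows (1 : Matrix m m ℝ) (0 : Matrix n m ℝ) = 1 := by
  rw [transpose_fromRows, fromCols_mul_fromRows]
  simp

lemma aux_F2_mul : (fromRows (0 : Matrix m n ℝ) (1 : Matrix n n ℝ))ᵀ *
    fromRows (0 : Matrix m n ℝ) (1 : Matrix n n ℝ) = 1 := by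
  rw [transpose_fromRows, fromCols_mul_fromRows]
  simp

lemma aux_block11 (R : Matrix (m ⊕ n) (m ⊕ n) ℝ) :
    R.toBlocks₁₁ = (fromRows (1 : Matrix m m ℝ) (0 : Matrix n m ℝ))ᵀ * R *
      fromRows (1 : Matrix m m ℝ) (0 : Matrix n m ℝ) := by
  nth_rewrite 2 [← fromBlocks_toBlocks R]
  rw [Matrix.mul_assoc, fromBlocks_mul_fromRows, transpose_fromRows, fromCols_mul_fromRows]
  simp

lemma aux_block12 (R : Matrix (m ⊕ n) (m ⊕ n) ℝ) :
    R.toBlocks₁₂ = (fromRows (1 : Matrix m m ℝ) (0 : Matrix n m ℝ))ᵀ * R *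
      fromRows (0 : Matrix m n ℝ) (1 : Matrix n n ℝ) := by
  nth_rewrite 2 [← fromBlocks_toBlocks R]
  rw [Matrix.mul_assoc, fromBlocks_mul_fromRows, transpose_fromRows, fromCols_mul_fromRows]
  simp

lemma aux_norm_sandwich (F : Matrix (m ⊕ n) m ℝ) (G : Matrix (m ⊕ n) n ℝ)
    (R : Matrix (m ⊕ n) (m ⊕ n) ℝ) (hF : ‖F‖ ≤ 1) (hG : ‖G‖ ≤ 1) :
    ‖Fᵀ * R * G‖ ≤ ‖R‖ := by
  have hFt : ‖Fᵀ‖ ≤ 1 := by rw [aux_opNorm_transpose]; exact hF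
  calc ‖Fᵀ * R * G‖ ≤ ‖Fᵀ * R‖ * ‖G‖ := Matrix.l2_opNorm_mul _ _
    _ ≤ (‖Fᵀ‖ * ‖R‖) * ‖G‖ :=
        mul_le_mul_of_nonneg_right (Matrix.l2_opNorm_mul _ _) (norm_nonneg _)
    _ ≤ (1 * ‖R‖) * 1 := by gcongr
    _ = ‖R‖ := by ring

lemma aux_norm_block_gen {p q : Type*} [Fintype p] [Fintype q] [DecidableEq p] [DecidableEq q]
    (F : Matrix (m ⊕ n) p ℝ) (G : Matrix (m ⊕ n) q ℝ)
    (R : Matrix (m ⊕ n) (m ⊕ n) ℝ) (hF : Fᵀ * F = 1) (hG : Gᵀ * G = 1) :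
    ‖Fᵀ * R * G‖ ≤ ‖R‖ := by
  have hF1 : ‖F‖ ≤ 1 := aux_opNorm_le_one _ hF
  have hG1 : ‖G‖ ≤ 1 := aux_opNorm_le_one _ hG
  have hFt : ‖Fᵀ‖ ≤ 1 := by rw [aux_opNorm_transpose]; exact hF1
  calc ‖Fᵀ * R * G‖ ≤ ‖Fᵀ * R‖ * ‖G‖ := Matrix.l2_opNorm_mul _ _
    _ ≤ (‖Fᵀ‖ * ‖R‖) * ‖G‖ :=
        mul_le_mul_of_nonneg_right (Matrix.l2_opNorm_mul _ _) (norm_nonneg _)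
    _ ≤ (1 * ‖R‖) * 1 := by gcongr
    _ = ‖R‖ := by ring

lemma aux_norm_block11 (R : Matrix (m ⊕ n) (m ⊕ n) ℝ) : ‖R.toBlocks₁₁‖ ≤ ‖R‖ := by
  rw [aux_block11]
  exact aux_norm_block_gen _ _ _ aux_F1_mul aux_F1_mul

lemma aux_norm_block12 (R : Matrix (m ⊕ n) (m ⊕ n) ℝ) : ‖R.toBlocks₁₂‖ ≤ ‖R‖ := by
  rw [aux_block12]
  exact aux_norm_block_gen _ _ _ aux_F1_mul aux_F2_mul

end AuxNoise

set_option maxHeartbeats 4000000 in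
/-- Signal subspace bound (Theorem 3.1 of the paper, noise case): with true SVD
`K = U Σ Vᵀ` (nonincreasing nonnegative singular values `σ`, `σ_k > 0`) and approximate
factorization `K = Û [[Σ̂_t, Ŵ₁₂],[Ŵ₂₁, Σ̂₀+W₂₂]] V̂ᵀ`, if `σ_k² > ‖Σ̂₀+W₂₂‖₂²` then
`‖V_kᵀ V̂₀‖₂ ≤ (σ_k ‖Ŵ₁₂‖₂ + ‖Ŵ₂₁‖₂ ‖Σ̂₀+W₂₂‖₂)/(σ_k² − ‖Σ̂₀+W₂₂‖₂²)`. -/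
theorem stmt7 (k l : ℕ) (hk : 0 < k)
    (K U V Uh Vh : Matrix (Fin (k + l)) (Fin (k + l)) ℝ)
    (σ : Fin (k + l) → ℝ)
    (St : Matrix (Fin k) (Fin k) ℝ) (W12 : Matrix (Fin k) (Fin l) ℝ)
    (W21 : Matrix (Fin l) (Fin k) ℝ) (S0 W22 : Matrix (Fin l) (Fin l) ℝ)
    (hU : Uᵀ * U = 1) (hU' : U * Uᵀ = 1) (hV : Vᵀ * V = 1) (hV' : V * Vᵀ = 1)
    (hUh : Uhᵀ * Uh = 1) (hUh' : Uh * Uhᵀ = 1) (hVh : Vhᵀ * Vh = 1) (hVh' : Vh * Vhᵀ = 1)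
    (hσdec : Antitone σ) (hσnn : ∀ i, 0 ≤ σ i)
    (hσk : 0 < σ ⟨k - 1, by omega⟩)
    (hSt : St.IsDiag) (hS0 : S0.IsDiag)
    (hK : K = U * Matrix.diagonal σ * Vᵀ)
    (hKh : K = Uh * (Matrix.fromBlocks St W12 W21 (S0 + W22)).submatrix
        finSumFinEquiv.symm finSumFinEquiv.symm * Vhᵀ)
    (hgap : ‖S0 + W22‖ ^ 2 < (σ ⟨k - 1, by omega⟩) ^ 2) :
    ‖(V.submatrix id (Fin.castAdd l))ᵀ * Vh.submatrix id (Fin.natAdd k)‖ ≤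
      (σ ⟨k - 1, by omega⟩ * ‖W12‖ + ‖W21‖ * ‖S0 + W22‖) /
        ((σ ⟨k - 1, by omega⟩) ^ 2 - ‖S0 + W22‖ ^ 2) := by
  classical
  set e : Fin k ⊕ Fin l ≃ Fin (k + l) := finSumFinEquiv with he
  set Sm : Matrix (Fin l) (Fin l) ℝ := S0 + W22 with hSm
  set B : Matrix (Fin k ⊕ Fin l) (Fin k ⊕ Fin l) ℝ := Matrix.fromBlocks St W12 W21 Sm with hB
  set M : Matrix (Fin (k + l)) (Fin (k + l)) ℝ := B.submatrix e.symm e.symm with hM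
  have hKK : U * Matrix.diagonal σ * Vᵀ = Uh * M * Vhᵀ := by rw [← hK, hKh]
  -- the two structural equations
  have hE1 : Matrix.diagonal σ * (Vᵀ * Vh) = (Uᵀ * Uh) * M := by
    calc Matrix.diagonal σ * (Vᵀ * Vh)
        = (Uᵀ * U) * (Matrix.diagonal σ * (Vᵀ * Vh)) := by rw [hU, one_mul]
      _ = Uᵀ * (U * Matrix.diagonal σ * Vᵀ) * Vh := by simp only [Matrix.mul_assoc]
      _ = Uᵀ * (Uh * M * Vhᵀ) * Vh := by rw [hKK]
      _ = (Uᵀ * Uh) * M * (Vhᵀ * Vh) := by simp only [Matrix.mul_assoc]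
      _ = (Uᵀ * Uh) * M := by rw [hVh, Matrix.mul_one]
  have hKT : V * Matrix.diagonal σ * Uᵀ = Vh * Mᵀ * Uhᵀ := by
    have h := congrArg Matrix.transpose hKK
    simpa [Matrix.transpose_mul, Matrix.diagonal_transpose, Matrix.mul_assoc] using h
  have hE2 : Matrix.diagonal σ * (Uᵀ * Uh) = (Vᵀ * Vh) * Mᵀ := by
    calc Matrix.diagonal σ * (Uᵀ * Uh)
        = (Vᵀ * V) * (Matrix.diagonal σ * (Uᵀ * Uh)) := by rw [hV, one_mul]
      _ = Vᵀ * (V * Matrix.diagonal σ * Uᵀ) * Uh := by simp only [Matrix.mul_assoc]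
      _ = Vᵀ * (Vh * Mᵀ * Uhᵀ) * Uh := by rw [hKT]
      _ = (Vᵀ * Vh) * Mᵀ * (Uhᵀ * Uh) := by simp only [Matrix.mul_assoc]
      _ = (Vᵀ * Vh) * Mᵀ := by rw [hUh, Matrix.mul_one]
  -- reindex over the sum type
  set P : Matrix (Fin k ⊕ Fin l) (Fin k ⊕ Fin l) ℝ := (Uᵀ * Uh).submatrix e e with hP
  set Q : Matrix (Fin k ⊕ Fin l) (Fin k ⊕ Fin l) ℝ := (Vᵀ * Vh).submatrix e e with hQ
  set Dk : Matrix (Fin k) (Fin k) ℝ :=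
    Matrix.diagonal (fun a : Fin k => σ (Fin.castAdd l a)) with hDk
  set Dl : Matrix (Fin l) (Fin l) ℝ :=
    Matrix.diagonal (fun b : Fin l => σ (Fin.natAdd k b)) with hDl
  have hD : (Matrix.diagonal σ).submatrix e e = Matrix.fromBlocks Dk 0 0 Dl := by
    rw [Matrix.submatrix_diagonal_equiv]
    have hσe : σ ∘ e = Sum.elim (fun a : Fin k => σ (Fin.castAdd l a))
        (fun b : Fin l => σ (Fin.natAdd k b)) := by
      funext p; cases p <;> simp [he]
    rw [hσe, hDk, hDl, Matrix.fromBlocks_diagonal]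
  have hM' : M.submatrix e e = B := by
    rw [hM, Matrix.submatrix_submatrix, Equiv.symm_comp_self, Matrix.submatrix_id_id]
  have hE1' : Matrix.fromBlocks Dk 0 0 Dl * Q = P * B := by
    have h1 : (Matrix.diagonal σ).submatrix e e * Q
        = (Matrix.diagonal σ * (Vᵀ * Vh)).submatrix e e :=
      Matrix.submatrix_mul_equiv _ _ _ e _
    have h2 : P * M.submatrix e e = ((Uᵀ * Uh) * M).submatrix e e :=
      Matrix.submatrix_mul_equiv _ _ _ e _
    rw [← hD, h1, hE1, ← h2, hM']
  have hE2' : Matrix.fromBlocks Dk 0 0 Dl * P = Q * Bᵀ := by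
    have h1 : (Matrix.diagonal σ).submatrix e e * P
        = (Matrix.diagonal σ * (Uᵀ * Uh)).submatrix e e :=
      Matrix.submatrix_mul_equiv _ _ _ e _
    have h2 : Q * (Mᵀ).submatrix e e = ((Vᵀ * Vh) * Mᵀ).submatrix e e :=
      Matrix.submatrix_mul_equiv _ _ _ e _
    have h3 : (Mᵀ).submatrix e e = Bᵀ := by
      rw [← Matrix.transpose_submatrix, hM']
    rw [← hD, h1, hE2, ← h2, h3]
  -- block equations
  set AA : Matrix (Fin k) (Fin k) ℝ := P.toBlocks₁₁ with hAA
  set BB : Matrix (Fin k) (Fin l) ℝ := P.toBlocks₁₂ with hBB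
  set CC : Matrix (Fin k) (Fin k) ℝ := Q.toBlocks₁₁ with hCC
  set XX : Matrix (Fin k) (Fin l) ℝ := Q.toBlocks₁₂ with hXX
  have e1 : Dk * XX = AA * W12 + BB * Sm := by
    have h : (Matrix.fromBlocks Dk 0 0 Dl * Q).toBlocks₁₂ = (P * B).toBlocks₁₂ :=
      congrArg _ hE1'
    rw [← Matrix.fromBlocks_toBlocks Q, ← Matrix.fromBlocks_toBlocks P, hB,
      Matrix.fromBlocks_multiply, Matrix.fromBlocks_multiply,
      Matrix.toBlocks_fromBlocks₁₂, Matrix.toBlocks_fromBlocks₁₂] at h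
    simpa [← hAA, ← hBB, ← hXX] using h
  have e2 : Dk * BB = CC * W21ᵀ + XX * Smᵀ := by
    have h : (Matrix.fromBlocks Dk 0 0 Dl * P).toBlocks₁₂ = (Q * Bᵀ).toBlocks₁₂ :=
      congrArg _ hE2'
    rw [← Matrix.fromBlocks_toBlocks P, ← Matrix.fromBlocks_toBlocks Q, hB,
      Matrix.fromBlocks_transpose, Matrix.fromBlocks_multiply, Matrix.fromBlocks_multiply,
      Matrix.toBlocks_fromBlocks₁₂, Matrix.toBlocks_fromBlocks₁₂] at h
    simpa [← hAA, ← hBB, ← hCC, ← hXX] using h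
  -- orthogonality and norm bounds
  have hPin : (Uhᵀ * U) * (Uᵀ * Uh) = 1 := by
    calc (Uhᵀ * U) * (Uᵀ * Uh) = Uhᵀ * (U * Uᵀ) * Uh := by simp only [Matrix.mul_assoc]
      _ = 1 := by rw [hU', Matrix.mul_one, hUh]
  have hQin : (Vhᵀ * V) * (Vᵀ * Vh) = 1 := by
    calc (Vhᵀ * V) * (Vᵀ * Vh) = Vhᵀ * (V * Vᵀ) * Vh := by simp only [Matrix.mul_assoc]
      _ = 1 := by rw [hV', Matrix.mul_one, hVh]
  have hPP : Pᵀ * P = 1 := by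
    rw [hP, Matrix.transpose_submatrix]
    have ht : (Uᵀ * Uh)ᵀ = Uhᵀ * U := by
      rw [Matrix.transpose_mul, Matrix.transpose_transpose]
    rw [ht, Matrix.submatrix_mul_equiv _ _ _ e _, hPin, Matrix.submatrix_one_equiv]
  have hQQ : Qᵀ * Q = 1 := by
    rw [hQ, Matrix.transpose_submatrix]
    have ht : (Vᵀ * Vh)ᵀ = Vhᵀ * V := by
      rw [Matrix.transpose_mul, Matrix.transpose_transpose]
    rw [ht, Matrix.submatrix_mul_equiv _ _ _ e _, hQin, Matrix.submatrix_one_equiv]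
  have hnP : ‖P‖ ≤ 1 := aux_opNorm_le_one _ hPP
  have hnQ : ‖Q‖ ≤ 1 := aux_opNorm_le_one _ hQQ
  have hnA : ‖AA‖ ≤ 1 := le_trans (aux_norm_block11 P) hnP
  have hnC : ‖CC‖ ≤ 1 := le_trans (aux_norm_block11 Q) hnQ
  -- the goal matrix is XX
  have hGoal : (V.submatrix id (Fin.castAdd l))ᵀ * Vh.submatrix id (Fin.natAdd k) = XX := by
    ext a b
    simp [Matrix.mul_apply, Matrix.toBlocks₁₂, hQ, he, hXX]
  -- inverse of Dk
  set sk : ℝ := σ ⟨k - 1, by omega⟩ with hsk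
  have hσa : ∀ a : Fin k, sk ≤ σ (Fin.castAdd l a) := by
    intro a
    apply hσdec
    rw [Fin.le_def]
    simp only [Fin.coe_castAdd]
    have := a.isLt
    omega
  have hσpos : ∀ a : Fin k, 0 < σ (Fin.castAdd l a) := fun a => lt_of_lt_of_le hσk (hσa a)
  set TT : Matrix (Fin k) (Fin k) ℝ :=
    Matrix.diagonal (fun a : Fin k => (σ (Fin.castAdd l a))⁻¹) with hTT
  have hTDk : TT * Dk = 1 := by
    have hfun : (fun a : Fin k => (σ (Fin.castAdd l a))⁻¹ * σ (Fin.castAdd l a)) = fun _ => (1:ℝ) :=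
      funext fun a => inv_mul_cancel₀ (hσpos a).ne'
    rw [hTT, hDk, Matrix.diagonal_mul_diagonal, hfun, Matrix.diagonal_one]
  have hsk0 : 0 < sk := hσk
  have hnT : ‖TT‖ ≤ sk⁻¹ := by
    apply aux_opNorm_diagonal_le _ _ (le_of_lt (inv_pos.2 hsk0))
    intro a
    rw [abs_of_pos (inv_pos.2 (hσpos a))]
    exact inv_anti₀ hsk0 (hσa a)
  -- solve for XX
  have hBBeq : BB = TT * (CC * W21ᵀ + XX * Smᵀ) := by
    calc BB = (TT * Dk) * BB := by rw [hTDk, Matrix.one_mul]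
      _ = TT * (Dk * BB) := by rw [Matrix.mul_assoc]
      _ = TT * (CC * W21ᵀ + XX * Smᵀ) := by rw [e2]
  have hXeq : XX = TT * (AA * W12) + TT * ((TT * (CC * W21ᵀ + XX * Smᵀ)) * Sm) := by
    calc XX = (TT * Dk) * XX := by rw [hTDk, Matrix.one_mul]
      _ = TT * (Dk * XX) := by rw [Matrix.mul_assoc]
      _ = TT * (AA * W12 + BB * Sm) := by rw [e1]
      _ = TT * (AA * W12) + TT * (BB * Sm) := by rw [Matrix.mul_add]
      _ = TT * (AA * W12) + TT * ((TT * (CC * W21ᵀ + XX * Smᵀ)) * Sm) := by rw [← hBBeq]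
  -- norm estimates
  have hb1 : ‖TT * (AA * W12)‖ ≤ sk⁻¹ * (1 * ‖W12‖) := by
    calc ‖TT * (AA * W12)‖ ≤ ‖TT‖ * ‖AA * W12‖ := Matrix.l2_opNorm_mul _ _
      _ ≤ ‖TT‖ * (‖AA‖ * ‖W12‖) :=
          mul_le_mul_of_nonneg_left (Matrix.l2_opNorm_mul _ _) (norm_nonneg _)
      _ ≤ sk⁻¹ * (1 * ‖W12‖) := by gcongr
  have hY : ‖TT * (CC * W21ᵀ + XX * Smᵀ)‖ ≤ sk⁻¹ * (1 * ‖W21‖ + ‖XX‖ * ‖Sm‖) := by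
    calc ‖TT * (CC * W21ᵀ + XX * Smᵀ)‖ ≤ ‖TT‖ * ‖CC * W21ᵀ + XX * Smᵀ‖ :=
          Matrix.l2_opNorm_mul _ _
      _ ≤ ‖TT‖ * (‖CC * W21ᵀ‖ + ‖XX * Smᵀ‖) :=
          mul_le_mul_of_nonneg_left (norm_add_le _ _) (norm_nonneg _)
      _ ≤ ‖TT‖ * (‖CC‖ * ‖W21ᵀ‖ + ‖XX‖ * ‖Smᵀ‖) := by
          apply mul_le_mul_of_nonneg_left _ (norm_nonneg _)
          exact add_le_add (Matrix.l2_opNorm_mul _ _) (Matrix.l2_opNorm_mul _ _)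
      _ = ‖TT‖ * (‖CC‖ * ‖W21‖ + ‖XX‖ * ‖Sm‖) := by
          rw [aux_opNorm_transpose, aux_opNorm_transpose]
      _ ≤ sk⁻¹ * (1 * ‖W21‖ + ‖XX‖ * ‖Sm‖) := by gcongr
  have hb2 : ‖TT * ((TT * (CC * W21ᵀ + XX * Smᵀ)) * Sm)‖ ≤
      sk⁻¹ * ((sk⁻¹ * (1 * ‖W21‖ + ‖XX‖ * ‖Sm‖)) * ‖Sm‖) := by
    calc ‖TT * ((TT * (CC * W21ᵀ + XX * Smᵀ)) * Sm)‖
        ≤ ‖TT‖ * ‖(TT * (CC * W21ᵀ + XX * Smᵀ)) * Sm‖ := Matrix.l2_opNorm_mul _ _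
      _ ≤ ‖TT‖ * (‖TT * (CC * W21ᵀ + XX * Smᵀ)‖ * ‖Sm‖) :=
          mul_le_mul_of_nonneg_left (Matrix.l2_opNorm_mul _ _) (norm_nonneg _)
      _ ≤ sk⁻¹ * ((sk⁻¹ * (1 * ‖W21‖ + ‖XX‖ * ‖Sm‖)) * ‖Sm‖) := by gcongr
  have hx : ‖XX‖ ≤ sk⁻¹ * (1 * ‖W12‖) +
      sk⁻¹ * ((sk⁻¹ * (1 * ‖W21‖ + ‖XX‖ * ‖Sm‖)) * ‖Sm‖) := by
    calc ‖XX‖ = ‖TT * (AA * W12) + TT * ((TT * (CC * W21ᵀ + XX * Smᵀ)) * Sm)‖ := by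
          rw [← hXeq]
      _ ≤ ‖TT * (AA * W12)‖ + ‖TT * ((TT * (CC * W21ᵀ + XX * Smᵀ)) * Sm)‖ := norm_add_le _ _
      _ ≤ _ := add_le_add hb1 hb2
  -- final arithmetic
  rw [hGoal]
  have hs0 : (0:ℝ) ≤ ‖Sm‖ := norm_nonneg _
  have hx0 : (0:ℝ) ≤ ‖XX‖ := norm_nonneg _
  have hw12 : (0:ℝ) ≤ ‖W12‖ := norm_nonneg _
  have hw21 : (0:ℝ) ≤ ‖W21‖ := norm_nonneg _
  have hgap' : ‖Sm‖ ^ 2 < sk ^ 2 := hgap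
  have hx2 : sk * sk * ‖XX‖ ≤ sk * ‖W12‖ + (‖W21‖ + ‖XX‖ * ‖Sm‖) * ‖Sm‖ := by
    have h := mul_le_mul_of_nonneg_left hx (by positivity : (0:ℝ) ≤ sk * sk)
    calc sk * sk * ‖XX‖ ≤ sk * sk * (sk⁻¹ * (1 * ‖W12‖) +
        sk⁻¹ * ((sk⁻¹ * (1 * ‖W21‖ + ‖XX‖ * ‖Sm‖)) * ‖Sm‖)) := h
      _ = sk * ‖W12‖ + (‖W21‖ + ‖XX‖ * ‖Sm‖) * ‖Sm‖ := by
          field_simp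
  rw [le_div_iff₀ (by nlinarith : (0:ℝ) < sk ^ 2 - ‖Sm‖ ^ 2)]
  nlinarith [hx2]
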